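/- Let L(τ,ρ,iη) = τI + ρA_1 + iΣ_{j≥2} η_j A_j with all A_j Hermitian (symmetric hyperbolic). Suppose the degree in ρ of det L(τ,ρ,iη) equals rank A_1 for all Re τ > τ_1 and η ∈ ℝ^{d-1}. Then for Re τ sufficiently large and η = 0, the number of roots ρ of det L(τ,ρ,0) = 0 with positive real part equals the number of negative eigenvalues of A_1 (counted with multiplicity), since ρ_j/τ ~ -1/λ_j as τ → +∞ where λ_j are the nonzero eigenvalues of A_1. -/

import Mathlib

open Matrix Polynomial

lemma countP_bind' {α β : Type*} (s : Multiset α) (f : α → Multiset β)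
    (p : β → Prop) [DecidablePred p] :
    Multiset.countP p (s.bind f) = (s.map fun a => Multiset.countP p (f a)).sum := by
  induction s using Multiset.induction with
  | empty => simp
  | cons a s ih => simp [Multiset.cons_bind, Multiset.countP_add, ih]

lemma countP_eq_sum_map' {α : Type*} (s : Multiset α) (p : α → Prop) [DecidablePred p] :
    Multiset.countP p s = (s.map fun a => if p a then 1 else 0).sum := by
  induction s using Multiset.induction with
  | empty => simp
  | cons a s ih => simp [Multiset.countP_cons, ih, add_comm]

lemma countP_singleton' {α : Type*} (p : α → Prop) [DecidablePred p] (a : α) :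
    Multiset.countP p {a} = if p a then 1 else 0 := by
  rw [← Multiset.cons_zero, Multiset.countP_cons]
  simp

lemma det_aux {n : ℕ} (A : Matrix (Fin n) (Fin n) ℂ) (hA : A.IsHermitian)
    (p q : Polynomial ℂ) :
    Matrix.det (p • (1 : Matrix (Fin n) (Fin n) (Polynomial ℂ)) + q • A.map Polynomial.C)
      = ∏ i, (p + q * Polynomial.C (hA.eigenvalues i : ℂ)) := by
  set U : Matrix (Fin n) (Fin n) ℂ := (hA.eigenvectorUnitary : Matrix (Fin n) (Fin n) ℂ)
  have hU : U * star U = 1 := (Matrix.mem_unitaryGroup_iff).mp hA.eigenvectorUnitary.2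
  set Cm : Matrix (Fin n) (Fin n) ℂ →+* Matrix (Fin n) (Fin n) (Polynomial ℂ) :=
    (Polynomial.C : ℂ →+* Polynomial ℂ).mapMatrix
  have hCm : ∀ M : Matrix (Fin n) (Fin n) ℂ, Cm M = M.map Polynomial.C := fun _ => rfl
  have hspec := hA.spectral_theorem
  have key : p • (1 : Matrix (Fin n) (Fin n) (Polynomial ℂ)) + q • A.map Polynomial.C
      = Cm U * (p • 1 + q • (Matrix.diagonal (RCLike.ofReal ∘ hA.eigenvalues)).map Polynomial.C)
        * Cm (star U) := by
    rw [← hCm, ← hCm]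
    rw [Matrix.mul_add, Matrix.add_mul, Matrix.mul_smul, Matrix.mul_smul,
      Matrix.smul_mul, Matrix.smul_mul]
    have hU' : star U * U = 1 := (Matrix.mem_unitaryGroup_iff').mp hA.eigenvectorUnitary.2
    congr 1
    · rw [Matrix.mul_one, ← _root_.map_mul, hU, _root_.map_one]
    · congr 1
      rw [← _root_.map_mul, ← _root_.map_mul, ← Unitary.conjStarAlgAut_apply (S := ℂ), ← hspec]
  have h1 : (Cm U).det * (Cm (star U)).det = 1 := by
    rw [← Matrix.det_mul, ← _root_.map_mul, hU, _root_.map_one, Matrix.det_one]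
  rw [key, Matrix.det_mul, Matrix.det_mul, mul_right_comm, h1, one_mul]
  have hdiag : p • (1 : Matrix (Fin n) (Fin n) (Polynomial ℂ))
      + q • (Matrix.diagonal (RCLike.ofReal ∘ hA.eigenvalues)).map Polynomial.C
      = Matrix.diagonal (fun i => p + q * Polynomial.C (hA.eigenvalues i : ℂ)) := by
    rw [Matrix.diagonal_map (by simp), Matrix.smul_one_eq_diagonal]
    ext i j
    rcases eq_or_ne i j with rfl | h
    · simp [Matrix.diagonal_apply_eq, smul_eq_mul]
    · simp [Matrix.diagonal_apply_ne _ h, h]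
  rw [hdiag, Matrix.det_diagonal]

/-- For a symmetric hyperbolic system nondegenerate with respect to `x₁`, for
`Re τ` sufficiently large and `η = 0`, the number of roots `ρ` of
`det L(τ,ρ,0) = 0` with positive real part equals the number of negative
eigenvalues of `A₁`, counted with multiplicity. -/
theorem roots_positive_real_part_count (n d : ℕ) [NeZero d]
    (A : Fin d → Matrix (Fin n) (Fin n) ℂ)
    (hherm : ∀ j, (A j).IsHermitian) (τ₁ : ℝ)
    (Pfull : ℂ → (Fin d → ℝ) → Polynomial ℂ)
    (hPfull : ∀ τ η, Pfull τ η = Matrix.det (Matrix.of fun a b : Fin n =>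
        Polynomial.C (τ * (if a = b then 1 else 0)
          + Complex.I * ∑ j ∈ Finset.univ.erase (0 : Fin d), (η j : ℂ) * A j a b)
        + Polynomial.X * Polynomial.C (A 0 a b)))
    (hdeg : ∀ (τ : ℂ) (η : Fin d → ℝ), τ₁ < τ.re →
      (Pfull τ η).natDegree = (A 0).rank) :
    ∃ T : ℝ, ∀ τ : ℂ, T < τ.re →
      Multiset.card ((Pfull τ 0).roots.filter fun ρ => 0 < ρ.re)
        = Multiset.card ((A 0).charpoly.roots.filter fun z => z.re < 0) := by
  have hA := hherm 0
  set ev := hA.eigenvalues with hev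
  refine ⟨max τ₁ 0, fun τ hτ => ?_⟩
  have hτ0 : 0 < τ.re := lt_of_le_of_lt (le_max_right _ _) hτ
  have hτne : τ ≠ 0 := fun h => by simp [h] at hτ0
  -- rewrite Pfull τ 0 as the product
  have hP : Pfull τ 0 = ∏ i, (Polynomial.C τ + Polynomial.X * Polynomial.C (ev i : ℂ)) := by
    rw [hPfull τ 0]
    have : (Matrix.of fun a b : Fin n =>
        Polynomial.C (τ * (if a = b then 1 else 0)
          + Complex.I * ∑ j ∈ Finset.univ.erase (0 : Fin d), (((0 : Fin d → ℝ) j) : ℂ) * A j a b)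
        + Polynomial.X * Polynomial.C (A 0 a b))
        = (Polynomial.C τ : Polynomial ℂ) • (1 : Matrix (Fin n) (Fin n) (Polynomial ℂ))
          + (Polynomial.X : Polynomial ℂ) • (A 0).map Polynomial.C := by
      ext a b
      simp only [Matrix.of_apply, Matrix.add_apply, Matrix.smul_apply, Matrix.one_apply,
        Matrix.map_apply, smul_eq_mul, Pi.zero_apply, Complex.ofReal_zero, zero_mul,
        Finset.sum_const_zero, mul_zero, add_zero]
      congr 1
      rcases eq_or_ne a b with rfl | hne
      · simp
      · simp [hne]
    rw [this, det_aux (A 0) hA]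
  -- charpoly as product
  have hC : (A 0).charpoly = ∏ i, (Polynomial.X - Polynomial.C (ev i : ℂ)) := by
    have : (A 0).charpoly = Matrix.det
        ((Polynomial.X : Polynomial ℂ) • (1 : Matrix (Fin n) (Fin n) (Polynomial ℂ))
          + (-1 : Polynomial ℂ) • (A 0).map Polynomial.C) := by
      rw [Matrix.charpoly]
      congr 1
      ext a b
      rcases eq_or_ne a b with rfl | hne
      · simp [Matrix.charmatrix_apply_eq, sub_eq_add_neg]
      · simp [Matrix.charmatrix_apply_ne _ _ _ hne, hne]
    rw [this, det_aux (A 0) hA]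
    exact Finset.prod_congr rfl fun i _ => by ring
  -- roots of charpoly
  have hCroots : (A 0).charpoly.roots = Multiset.map (fun i => ((ev i : ℝ) : ℂ)) Finset.univ.val := by
    rw [hC]
    have : ∏ i : Fin n, (Polynomial.X - Polynomial.C (ev i : ℂ))
        = ((Finset.univ.val.map (fun i => ((ev i : ℝ) : ℂ))).map
            fun a => Polynomial.X - Polynomial.C a).prod := by
      rw [Multiset.map_map]; rfl
    rw [this, Polynomial.roots_multiset_prod_X_sub_C]
  -- roots of each factor
  have hfac : ∀ i : Fin n, (Polynomial.C τ + Polynomial.X * Polynomial.C (ev i : ℂ)).roots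
      = if ev i < 0 ∨ 0 < ev i then {-τ / (ev i : ℂ)} else 0 := by
    intro i
    rcases eq_or_ne (ev i) 0 with h0 | h0
    · simp [h0]
    · have hμ : ((ev i : ℝ) : ℂ) ≠ 0 := Complex.ofReal_ne_zero.mpr h0
      have hfac2 : Polynomial.C τ + Polynomial.X * Polynomial.C ((ev i : ℝ) : ℂ)
          = Polynomial.C ((ev i : ℝ) : ℂ) * (Polynomial.X - Polynomial.C (-τ / (ev i : ℂ))) := by
        have hc : ((ev i : ℝ) : ℂ) * (-τ / ((ev i : ℝ) : ℂ)) = -τ := by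
          rw [mul_comm, div_mul_cancel₀ _ hμ]
        rw [mul_sub, ← _root_.map_mul, hc, map_neg, sub_neg_eq_add]
        ring
      rw [hfac2, Polynomial.roots_C_mul _ hμ, Polynomial.roots_X_sub_C]
      rw [if_pos (h0.lt_or_gt)]
  have hfacne : ∀ i : Fin n,
      (Polynomial.C τ + Polynomial.X * Polynomial.C (ev i : ℂ)) ≠ 0 := by
    intro i h
    have := congrArg (fun p => Polynomial.coeff p 0) h
    simp [Polynomial.mul_coeff_zero] at this
    exact hτne this
  have hprodne : (∏ i : Fin n, (Polynomial.C τ + Polynomial.X * Polynomial.C (ev i : ℂ))) ≠ 0 :=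
    Finset.prod_ne_zero_iff.mpr fun i _ => hfacne i
  have hProots : (Pfull τ 0).roots
      = Finset.univ.val.bind fun i =>
          (Polynomial.C τ + Polynomial.X * Polynomial.C (ev i : ℂ)).roots := by
    rw [hP, Polynomial.roots_prod _ _ hprodne]
  -- counting
  rw [← Multiset.countP_eq_card_filter, ← Multiset.countP_eq_card_filter,
    hProots, hCroots, countP_bind', Multiset.countP_map,
    ← Multiset.countP_eq_card_filter, countP_eq_sum_map']
  congr 1
  refine Multiset.map_congr rfl fun i _ => ?_
  rw [hfac i]
  rcases lt_trichotomy (ev i) 0 with hlt | heq | hgt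
  · have h1 : 0 < (-τ / ((ev i : ℝ) : ℂ)).re := by
      rw [neg_div, Complex.neg_re, Complex.div_ofReal_re]
      have := div_neg_of_pos_of_neg hτ0 hlt
      linarith
    have h2 : (((ev i : ℝ) : ℂ)).re < 0 := by simpa using hlt
    rw [if_pos (Or.inl hlt), countP_singleton', if_pos h1, if_pos h2]
  · rw [if_neg (by simp [heq]), if_neg (by simp [heq]), Multiset.countP_zero]
  · have h1 : ¬ (0 < (-τ / ((ev i : ℝ) : ℂ)).re) := by
      rw [neg_div, Complex.neg_re, Complex.div_ofReal_re]
      have := div_pos hτ0 hgt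
      linarith
    have h2 : ¬ ((((ev i : ℝ) : ℂ)).re < 0) := by simpa using hgt.le
    rw [if_pos (Or.inr hgt), countP_singleton', if_neg h1, if_neg h2]
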